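/- Let n, N ∈ ℕ and a_1, …, a_{3n} ∈ ℕ satisfy N/4 < a_i < N/2 for all i and Σ_{i=1}^{3n} a_i = nN, and let v, w be the associated words over 𝒜 = {a,b,c,d}. If this instance of 3-PARTITION is solvable, then d_cbi(v, w) ≤ 3n. -/

import Mathlib

/-- Two positive words are related if they contain the same number of each letter. -/
def Related {A : Type*} [DecidableEq A] (v w : List A) : Prop :=
  ∀ a : A, v.count a = w.count a

/-- `w` is a cyclic block interchange of `v`. -/
def IsCBI {A : Type*} (v w : List A) : Prop :=
  ∃ v' w' : List A, List.IsRotated v' v ∧ List.IsRotated w' w ∧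
    ∃ w1 w2 w3 w4 : List A, v' = w1 ++ w2 ++ w3 ++ w4 ∧ w' = w1 ++ w4 ++ w3 ++ w2

open Classical in
/-- The cyclic block interchange distance between two related words. -/
noncomputable def dcbi {A : Type*} (v w : List A) : ℕ :=
  if List.IsRotated v w then 0
  else sInf {k | ∃ z : ℕ → List A, z 0 = v ∧ z k = w ∧ ∀ i < k, IsCBI (z i) (z (i + 1))}

/-- The four-letter alphabet `𝒜 = {a,b,c,d}`. -/
inductive Letter where
  | a | b | c | d
deriving DecidableEq

open Letter

/-- The word `v = a^(n+1) (b c^(a₁) d)(b c^(a₂) d) ⋯ (b c^(a_{3n}) d) b`. -/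
def vWord (n : ℕ) (f : Fin (3 * n) → ℕ) : List Letter :=
  List.replicate (n + 1) a ++
    (List.ofFn fun i : Fin (3 * n) => b :: (List.replicate (f i) c ++ [d])).flatten ++ [b]

/-- The word `w = (a c^N d³)^n a b^(3n+1)`. -/
def wWord (n N : ℕ) : List Letter :=
  (List.replicate n (a :: (List.replicate N c ++ [d, d, d]))).flatten ++
    a :: List.replicate (3 * n + 1) b

/-- The instance of 3-PARTITION given by `a₁, …, a_{3n}` and `N` is solvable:
`{1, …, 3n}` can be partitioned into `n` three-element sets, each summing to `N`. -/
def Solvable3Partition (n N : ℕ) (f : Fin (3 * n) → ℕ) : Prop :=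
  ∃ P : Fin n → Finset (Fin (3 * n)),
    (∀ j, (P j).card = 3) ∧ (∀ j, ∑ i ∈ P j, f i = N) ∧ (∀ i, ∃! j, i ∈ P j)

namespace CBIAux

lemma isCBI_move {A : Type*} (α δ u γ : List A) :
    IsCBI (α ++ δ ++ u ++ γ) (α ++ u ++ δ ++ γ) := by
  refine ⟨δ ++ u ++ (γ ++ α), γ ++ α ++ u ++ δ, ?_, ?_,
    [], δ, u, γ ++ α, by simp, by simp⟩
  · have := List.isRotated_append (l := δ ++ u ++ γ) (l' := α)
    simpa [List.append_assoc] using this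
  · have := List.isRotated_append (l := γ) (l' := α ++ u ++ δ)
    simpa [List.append_assoc] using this

lemma ofFn_flatten_split {X : Type*} : ∀ {m : ℕ} (j₀ : Fin m) (F G : Fin m → List X),
    (∀ j, j ≠ j₀ → G j = F j) →
    ∃ A B, (List.ofFn F).flatten = A ++ F j₀ ++ B ∧ (List.ofFn G).flatten = A ++ G j₀ ++ B := by
  intro m
  induction m with
  | zero => exact fun j₀ => j₀.elim0
  | succ m ih =>
    intro j₀ F G h
    rcases Fin.eq_zero_or_eq_succ j₀ with h0 | ⟨j', rfl⟩
    · subst h0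
      have hG : (fun j : Fin m => G j.succ) = fun j : Fin m => F j.succ := by
        funext j; exact h j.succ (Fin.succ_ne_zero j)
      refine ⟨[], (List.ofFn fun j : Fin m => F j.succ).flatten, ?_, ?_⟩
      · simp [List.ofFn_succ]
      · simp [List.ofFn_succ, hG]
    · obtain ⟨A, B, hF, hG⟩ := ih j' (fun j => F j.succ) (fun j => G j.succ)
        (fun j hj => h j.succ (by simpa [Fin.succ_inj] using hj))
      have h0 : G 0 = F 0 := h 0 (Ne.symm (Fin.succ_ne_zero j'))
      refine ⟨F 0 ++ A, B, ?_, ?_⟩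
      · simp [List.ofFn_succ, hF, List.append_assoc]
      · simp [List.ofFn_succ, hG, h0, List.append_assoc]

lemma ofFn_const_flatten {X : Type*} (x : X) : ∀ (m : ℕ),
    (List.ofFn fun _ : Fin m => [x]).flatten = List.replicate m x := by
  intro m
  induction m with
  | zero => simp
  | succ m ih => simp [List.ofFn_succ, ih, List.replicate_succ]

variable (n : ℕ) (f : Fin (3 * n) → ℕ) (g : Fin (3 * n) → Fin n)

/-- sum of processed entries in group `j` after `k` steps -/
def Sk (k : ℕ) (j : Fin n) : ℕ :=
  ∑ i ∈ Finset.univ.filter (fun i : Fin (3 * n) => g i = j ∧ i.val < k), f i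

/-- number of processed entries in group `j` after `k` steps -/
def Tk (k : ℕ) (j : Fin n) : ℕ :=
  (Finset.univ.filter (fun i : Fin (3 * n) => g i = j ∧ i.val < k)).card

def gpiece (k : ℕ) (j : Fin n) : List Letter :=
  [a] ++ List.replicate (Sk n f g k j) c ++ List.replicate (Tk n g k j) d

def cpiece (k : ℕ) (i : Fin (3 * n)) : List Letter :=
  [b] ++ (if i.val < k then [] else List.replicate (f i) c ++ [d])

def zW (k : ℕ) : List Letter :=
  (List.ofFn (gpiece n f g k)).flatten ++ [a] ++ (List.ofFn (cpiece n f k)).flatten ++ [b]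

lemma zW_zero : zW n f g 0 = vWord n f := by
  have hS : ∀ j, Sk n f g 0 j = 0 := by
    intro j; simp [Sk]
  have hT : ∀ j, Tk n g 0 j = 0 := by
    intro j; simp [Tk]
  have h1 : (List.ofFn (gpiece n f g 0)).flatten = List.replicate n a := by
    have : gpiece n f g 0 = fun _ => [a] := by
      funext j; simp [gpiece, hS, hT]
    rw [this, ofFn_const_flatten]
  have h2 : cpiece n f 0 = fun i => b :: (List.replicate (f i) c ++ [d]) := by
    funext i; simp [cpiece]
  rw [zW, h1, h2, vWord]
  have : List.replicate (n + 1) a = List.replicate n a ++ [a] := List.replicate_succ'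
  rw [this]

lemma zW_final (N : ℕ)
    (hN : ∀ j, ∑ i ∈ Finset.univ.filter (fun i : Fin (3 * n) => g i = j), f i = N)
    (hT3 : ∀ j, (Finset.univ.filter (fun i : Fin (3 * n) => g i = j)).card = 3) :
    zW n f g (3 * n) = wWord n N := by
  have hfilt : ∀ j, Finset.univ.filter (fun i : Fin (3 * n) => g i = j ∧ i.val < 3 * n)
      = Finset.univ.filter (fun i : Fin (3 * n) => g i = j) := by
    intro j; apply Finset.filter_congr; intro i _; simp [i.isLt]
  have h1 : gpiece n f g (3 * n) = fun _ => a :: (List.replicate N c ++ [d, d, d]) := by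
    funext j
    simp [gpiece, Sk, Tk, hfilt, hN j, hT3 j, List.replicate_succ]
  have h2 : cpiece n f (3 * n) = fun _ => [b] := by
    funext i; simp [cpiece, i.isLt]
  rw [zW, h1, h2, ofFn_const_flatten, wWord]
  have hrep : ∀ m : ℕ, (List.ofFn fun _ : Fin m => a :: (List.replicate N c ++ [d, d, d])).flatten
      = (List.replicate m (a :: (List.replicate N c ++ [d, d, d]))).flatten := by
    intro m; rw [List.ofFn_const]
  rw [hrep]
  have : List.replicate (3 * n + 1) b = List.replicate (3 * n) b ++ [b] :=
    List.replicate_succ'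
  rw [this]
  simp [List.append_assoc]

lemma zW_step (k : ℕ) (hk : k < 3 * n) : IsCBI (zW n f g k) (zW n f g (k + 1)) := by
  obtain ⟨i₀, hv⟩ : ∃ i₀ : Fin (3 * n), i₀.val = k := ⟨⟨k, hk⟩, rfl⟩
  -- the filter at step k+1 for group (g i₀) is insert i₀ of that at step k
  have hins : Finset.univ.filter (fun i : Fin (3 * n) => g i = g i₀ ∧ i.val < k + 1)
      = insert i₀ (Finset.univ.filter (fun i : Fin (3 * n) => g i = g i₀ ∧ i.val < k)) := by
    ext i
    simp only [Finset.mem_filter, Finset.mem_univ, true_and, Finset.mem_insert]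
    constructor
    · rintro ⟨hgi, hlt⟩
      rcases Nat.lt_or_ge i.val k with h | h
      · exact Or.inr ⟨hgi, h⟩
      · exact Or.inl (Fin.ext (by omega))
    · rintro (rfl | ⟨hgi, hlt⟩)
      · exact ⟨rfl, by omega⟩
      · exact ⟨hgi, Nat.lt_succ_of_lt hlt⟩
  have hnotmem : i₀ ∉ Finset.univ.filter (fun i : Fin (3 * n) => g i = g i₀ ∧ i.val < k) := by
    simp [hv]
  have hSstep : Sk n f g (k + 1) (g i₀) = f i₀ + Sk n f g k (g i₀) := by
    rw [Sk, Sk, hins, Finset.sum_insert hnotmem]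
  have hTstep : Tk n g (k + 1) (g i₀) = Tk n g k (g i₀) + 1 := by
    rw [Tk, Tk, hins, Finset.card_insert_of_notMem hnotmem]
  -- pieces at other indices are unchanged
  have hgsame : ∀ j, j ≠ g i₀ → gpiece n f g (k + 1) j = gpiece n f g k j := by
    intro j hj
    have hfilt : Finset.univ.filter (fun i : Fin (3 * n) => g i = j ∧ i.val < k + 1)
        = Finset.univ.filter (fun i : Fin (3 * n) => g i = j ∧ i.val < k) := by
      ext i
      simp only [Finset.mem_filter, Finset.mem_univ, true_and]
      constructor
      · rintro ⟨hgi, hlt⟩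
        refine ⟨hgi, ?_⟩
        rcases Nat.lt_or_ge i.val k with h | h
        · exact h
        · exfalso
          have hii : i = i₀ := Fin.ext (by omega)
          rw [hii] at hgi
          exact hj hgi.symm
      · rintro ⟨hgi, hlt⟩; exact ⟨hgi, Nat.lt_succ_of_lt hlt⟩
    simp only [gpiece, Sk, Tk, hfilt]
  have hcsame : ∀ i, i ≠ i₀ → cpiece n f (k + 1) i = cpiece n f k i := by
    intro i hi
    have hlt : (i.val < k + 1) = (i.val < k) := by
      apply propext; constructor
      · intro h
        rcases Nat.lt_or_ge i.val k with h' | h'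
        · exact h'
        · exact absurd (Fin.ext (by omega)) hi
      · exact Nat.lt_succ_of_lt
    simp [cpiece, hlt]
  obtain ⟨A1, B1, hF1, hG1⟩ :=
    ofFn_flatten_split (g i₀) (gpiece n f g k) (gpiece n f g (k + 1)) hgsame
  obtain ⟨A2, B2, hF2, hG2⟩ :=
    ofFn_flatten_split i₀ (cpiece n f k) (cpiece n f (k + 1)) hcsame
  set S := Sk n f g k (g i₀) with hS
  set T := Tk n g k (g i₀) with hT
  set u : List Letter := List.replicate (f i₀) c ++ [d] with hu
  have hgk : gpiece n f g k (g i₀) = [a] ++ List.replicate S c ++ List.replicate T d := rfl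
  have hgk1 : gpiece n f g (k + 1) (g i₀)
      = [a] ++ List.replicate S c ++ u ++ List.replicate T d := by
    have e1 : List.replicate (f i₀ + S) c = List.replicate S c ++ List.replicate (f i₀) c := by
      rw [Nat.add_comm, List.replicate_add]
    have e2 : List.replicate (T + 1) d = d :: List.replicate T d := by
      rw [List.replicate_succ]
    rw [gpiece, hSstep, hTstep, e1, e2, hu]
    simp only [List.append_assoc, List.cons_append, List.singleton_append, List.nil_append]
  have hck : cpiece n f k i₀ = [b] ++ u := by
    simp [cpiece, hu, hv]
  have hck1 : cpiece n f (k + 1) i₀ = [b] := by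
    simp [cpiece, hv]
  have hzk : zW n f g k
      = (A1 ++ [a] ++ List.replicate S c) ++
        (List.replicate T d ++ B1 ++ [a] ++ A2 ++ [b]) ++ u ++ (B2 ++ [b]) := by
    rw [zW, hF1, hF2, hgk, hck]
    simp [List.append_assoc]
  have hzk1 : zW n f g (k + 1)
      = (A1 ++ [a] ++ List.replicate S c) ++ u ++
        (List.replicate T d ++ B1 ++ [a] ++ A2 ++ [b]) ++ (B2 ++ [b]) := by
    rw [zW, hG1, hG2, hgk1, hck1]
    simp [List.append_assoc]
  rw [hzk, hzk1]
  exact isCBI_move _ _ _ _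

end CBIAux

/-- If the instance of 3-PARTITION is solvable, then `d_cbi(v,w) ≤ 3n` for the
associated words `v, w`. -/
theorem three_partition_dcbi_le (n N : ℕ) (f : Fin (3 * n) → ℕ)
    (hbound : ∀ i, N < 4 * f i ∧ 2 * f i < N) (hsum : ∑ i, f i = n * N)
    (hsol : Solvable3Partition n N f) :
    dcbi (vWord n f) (wWord n N) ≤ 3 * n := by
  obtain ⟨P, hcard, hsumP, huniq⟩ := hsol
  choose g hmem huni using huniq
  have hPg : ∀ j, P j = Finset.univ.filter (fun i : Fin (3 * n) => g i = j) := by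
    intro j
    ext i
    simp only [Finset.mem_filter, Finset.mem_univ, true_and]
    constructor
    · intro h; exact (huni i j h).symm
    · rintro rfl; exact hmem i
  have hN : ∀ j, ∑ i ∈ Finset.univ.filter (fun i : Fin (3 * n) => g i = j), f i = N := by
    intro j; rw [← hPg]; exact hsumP j
  have hT3 : ∀ j, (Finset.univ.filter (fun i : Fin (3 * n) => g i = j)).card = 3 := by
    intro j; rw [← hPg]; exact hcard j
  unfold dcbi
  split_ifs with h
  · exact Nat.zero_le _
  · exact Nat.sInf_le ⟨fun k => CBIAux.zW n f g k, CBIAux.zW_zero n f g,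
      CBIAux.zW_final n f g N hN hT3, fun k hk => CBIAux.zW_step n f g k hk⟩
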